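/- If (v,c) ∈ ℝⁿ × ℝ₊ is a weak subgradient of the radial epiderivative function h ↦ f^r(x̄;h) at 0, then (v,c) is a weak subgradient of f at x̄; conversely, every weak subgradient (v,c) of f at x̄ is a weak subgradient of f^r(x̄;·) at 0. Hence ∂ʷf^r(x̄;0) = ∂ʷf(x̄). -/

import Mathlib

open Filter Topology

/-- The radial epiderivative of `f` at `x` in direction `h`:
`f^r(x;h) = inf_{t>0} liminf_{u → h} (f(x + t u) - f(x)) / t`, valued in `EReal`. -/
noncomputable def radEpi {X : Type*} [NormedAddCommGroup X] [NormedSpace ℝ X]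
    (f : X → ℝ) (x h : X) : EReal :=
  ⨅ t : Set.Ioi (0 : ℝ),
    Filter.liminf (fun u : X => (((f (x + (t : ℝ) • u) - f x) / (t : ℝ) : ℝ) : EReal)) (𝓝 h)

/-- `(v, c)` is a weak subgradient of `g` at `x₀`:
`g x ≥ g x₀ + ⟪v, x - x₀⟫ - c ‖x - x₀‖` for all `x`. -/
def IsWeakSubgradient {n : ℕ} (g : EuclideanSpace ℝ (Fin n) → ℝ)
    (x₀ v : EuclideanSpace ℝ (Fin n)) (c : ℝ) : Prop :=
  ∀ x, g x ≥ g x₀ + (inner ℝ v (x - x₀) : ℝ) - c * ‖x - x₀‖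

/-- `∂ʷ f^r(x₀; ·)(0) = ∂ʷ f(x₀)`: a pair `(v, c)` with `c ≥ 0` is a weak subgradient
of the (finite-valued) radial epiderivative at `0` iff it is a weak subgradient of `f`
at `x₀`. -/
theorem weakSubdifferential_radEpi_eq {n : ℕ}
    (f : EuclideanSpace ℝ (Fin n) → ℝ) (x₀ : EuclideanSpace ℝ (Fin n))
    (φ : EuclideanSpace ℝ (Fin n) → ℝ)
    (hφ : ∀ h, radEpi f x₀ h = ((φ h : ℝ) : EReal)) (hφ0 : φ 0 = 0) :
    ∀ (v : EuclideanSpace ℝ (Fin n)) (c : ℝ), 0 ≤ c →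
      (IsWeakSubgradient φ 0 v c ↔ IsWeakSubgradient f x₀ v c) := by
  intro v c hc
  -- A general lemma: the radial epiderivative is bounded above by the difference quotient.
  have key : ∀ h : EuclideanSpace ℝ (Fin n), φ h ≤ f (x₀ + h) - f x₀ := by
    intro h
    have h2 : radEpi f x₀ h ≤
        Filter.liminf (fun u : EuclideanSpace ℝ (Fin n) =>
          (((f (x₀ + ((⟨1, by norm_num⟩ : Set.Ioi (0:ℝ)) : ℝ) • u) - f x₀) /
            ((⟨1, by norm_num⟩ : Set.Ioi (0:ℝ)) : ℝ) : ℝ) : EReal)) (𝓝 h) :=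
      iInf_le _ (⟨1, by norm_num⟩ : Set.Ioi (0:ℝ))
    have h3 : Filter.liminf (fun u : EuclideanSpace ℝ (Fin n) =>
        (((f (x₀ + ((⟨1, by norm_num⟩ : Set.Ioi (0:ℝ)) : ℝ) • u) - f x₀) /
          ((⟨1, by norm_num⟩ : Set.Ioi (0:ℝ)) : ℝ) : ℝ) : EReal)) (𝓝 h)
        ≤ (((f (x₀ + h) - f x₀ : ℝ)) : EReal) := by
      have hfr : ∃ᶠ u in 𝓝 h,
          (((f (x₀ + ((⟨1, by norm_num⟩ : Set.Ioi (0:ℝ)) : ℝ) • u) - f x₀) /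
            ((⟨1, by norm_num⟩ : Set.Ioi (0:ℝ)) : ℝ) : ℝ) : EReal)
          ≤ ((f (x₀ + h) - f x₀ : ℝ) : EReal) := by
        rw [Filter.Frequently]
        intro hcon
        have := hcon.self_of_nhds
        simp at this
      exact liminf_le_of_frequently_le' hfr
    have h4 : radEpi f x₀ h ≤ ((f (x₀ + h) - f x₀ : ℝ) : EReal) := h2.trans h3
    rw [hφ h] at h4
    exact_mod_cast h4
  constructor
  · intro hs x
    have h2 := hs (x - x₀)
    have h3 := key (x - x₀)
    rw [add_sub_cancel] at h3
    simp only [hφ0, sub_zero, zero_add, ge_iff_le] at h2 ⊢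
    linarith
  · intro hs x
    -- show the lower bound on the radial epiderivative
    have key2 : ((inner ℝ v x - c * ‖x‖ : ℝ) : EReal) ≤ radEpi f x₀ x := by
      refine le_iInf fun t => ?_
      obtain ⟨t, ht⟩ := t
      have ht' : (0:ℝ) < t := ht
      have hpt : ∀ u : EuclideanSpace ℝ (Fin n),
          ((inner ℝ v u - c * ‖u‖ : ℝ) : EReal) ≤
          (((f (x₀ + t • u) - f x₀) / t : ℝ) : EReal) := by
        intro u
        rw [EReal.coe_le_coe_iff]
        have hx := hs (x₀ + t • u)
        rw [add_sub_cancel_left] at hx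
        have h1 : (inner ℝ v (t • u) : ℝ) = t * inner ℝ v u := real_inner_smul_right v u t
        have h2 : ‖t • u‖ = t * ‖u‖ := by
          rw [norm_smul, Real.norm_of_nonneg ht'.le]
        rw [le_div_iff₀ ht']
        rw [h1, h2] at hx
        nlinarith [hx]
      have hcont : Filter.Tendsto
          (fun u : EuclideanSpace ℝ (Fin n) => ((inner ℝ v u - c * ‖u‖ : ℝ) : EReal)) (𝓝 x)
          (𝓝 ((inner ℝ v x - c * ‖x‖ : ℝ) : EReal)) := by
        apply Filter.Tendsto.comp (continuous_coe_real_ereal.tendsto _)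
        exact ((continuous_inner.comp (continuous_const.prodMk continuous_id)).sub
          (continuous_const.mul continuous_norm)).tendsto x
      calc ((inner ℝ v x - c * ‖x‖ : ℝ) : EReal)
          = Filter.liminf (fun u : EuclideanSpace ℝ (Fin n) =>
              ((inner ℝ v u - c * ‖u‖ : ℝ) : EReal)) (𝓝 x) := hcont.liminf_eq.symm
        _ ≤ _ := liminf_le_liminf (Filter.Eventually.of_forall hpt)
    rw [hφ x] at key2
    have key3 : inner ℝ v x - c * ‖x‖ ≤ φ x := by exact_mod_cast key2
    simp only [hφ0, sub_zero, zero_add, ge_iff_le]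
    exact key3
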